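/- Let A ∈ ℝ^{m×l×n}, X⋆ ∈ ℝ^{l×p×n}, B⋆ = A∗X⋆, and B = B⋆ + B_corr ∈ ℝ^{m×p×n}, where the corruption set C = {(i,j,h) : (B_corr)_{ijh} ≠ 0} has size |C| = β·mpn. Let 0 < q < 1 − β. Suppose X ∈ ℝ^{l×p×n} is the current iterate, E = A∗X − B, and i ∈ [m] is a row index such that M_i M_iᵀ is invertible and |E_{ijh}| < Q_q(E) for all j ∈ [p] and h ∈ [n]. Let X⁺ be the Kaczmarz update of X at row i. Then ‖X⁺ − X⋆‖_F ≤ ‖X − X⋆‖_F · (1 + σ_max(bcirc(A))·η / √(m(1−β−q))), where η = max_{i∈[m]} σ_max(M_iᵀ(M_iM_iᵀ)^{-1}). -/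

import Mathlib

open scoped BigOperators
open Matrix

/-- A real third-order tensor of size `a × b × c` (zero-indexed). -/
abbrev Tensor (a b c : ℕ) := Fin a → Fin b → Fin c → ℝ

/-- Frobenius norm of a third-order tensor: the square root of the sum of
squares of all entries. -/
noncomputable def frob {a b c : ℕ} (X : Tensor a b c) : ℝ :=
  Real.sqrt (∑ i, ∑ j, ∑ k, (X i j k) ^ 2)

/-- The block-circulant matrix of a third-order tensor: the `(r, s)` block is
the frontal slice of index `r - s (mod c)` (zero-indexed). -/
def bcirc {a b c : ℕ} (A : Tensor a b c) : Matrix (Fin c × Fin a) (Fin c × Fin b) ℝ :=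
  fun ri sj => A ri.2 sj.2 (ri.1 - sj.1)

/-- Unfolding: stack the frontal slices of a tensor vertically into a matrix. -/
def unfoldT {a b c : ℕ} (X : Tensor a b c) : Matrix (Fin c × Fin a) (Fin b) ℝ :=
  fun ki j => X ki.2 j ki.1

/-- The t-product of two third-order tensors:
`A ∗ X = fold (bcirc A * unfold X)`. -/
noncomputable def tMul {a b c d : ℕ} (A : Tensor a b c) (X : Tensor b d c) : Tensor a d c :=
  fun i j k => (bcirc A * unfoldT X) (k, i) j

/-- The largest singular value of a real matrix: the square root of the largest
eigenvalue of the symmetric positive semidefinite matrix `Mᵀ * M`. -/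
noncomputable def sigmaMax {ι κ : Type*} [Fintype ι] [Fintype κ] [DecidableEq κ]
    (M : Matrix ι κ ℝ) : ℝ :=
  Real.sqrt (⨆ i, (by simpa [Matrix.conjTranspose_eq_transpose_of_trivial] using
      Matrix.isHermitian_conjTranspose_mul_self M :
    (Mᵀ * M).IsHermitian).eigenvalues i)

/-- The empirical `q`-quantile of the absolute values of the entries of a
third-order tensor: the `⌊q · abc⌋`-th smallest element (1-indexed) of the
multiset `{|E i j k|}`. -/
noncomputable def quantile {a b c : ℕ} (q : ℝ) (E : Tensor a b c) : ℝ :=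
  (((Finset.univ : Finset (Fin a × Fin b × Fin c)).val.map
      (fun t => |E t.1 t.2.1 t.2.2|)).sort (· ≤ ·)).getD
    (⌊q * ((a * b * c : ℕ) : ℝ)⌋.toNat - 1) 0

/-- The `i`-th horizontal (row) slice of a tensor, as a `1 × b × c` tensor. -/
def rowSlice {a b c : ℕ} (A : Tensor a b c) (i : Fin a) : Tensor 1 b c :=
  fun _ j k => A i j k

/-- The (tensor) Kaczmarz update of `X` at row slice `i`, for the system
`A ∗ X = B`:  `unfold X⁺ = unfold X - Mᵢᵀ (Mᵢ Mᵢᵀ)⁻¹ (Mᵢ · unfold X - unfold Bᵢ)`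
where `Mᵢ = bcirc (Aᵢ::)`. -/
noncomputable def kUpdate {m l p n : ℕ} (A : Tensor m l n) (B : Tensor m p n)
    (X : Tensor l p n) (i : Fin m) : Tensor l p n :=
  fun a j k =>
    X a j k -
      ((bcirc (rowSlice A i))ᵀ * (bcirc (rowSlice A i) * (bcirc (rowSlice A i))ᵀ)⁻¹ *
        (bcirc (rowSlice A i) * unfoldT X - unfoldT (rowSlice B i))) (k, a) j

/-- The quantity `η = maxᵢ σ_max(Mᵢᵀ (Mᵢ Mᵢᵀ)⁻¹)` where `Mᵢ = bcirc (Aᵢ::)`. -/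
noncomputable def eta {m l n : ℕ} (A : Tensor m l n) : ℝ :=
  ⨆ i : Fin m, sigmaMax ((bcirc (rowSlice A i))ᵀ *
    (bcirc (rowSlice A i) * (bcirc (rowSlice A i))ᵀ)⁻¹)

/- ======================= auxiliary lemmas ======================= -/

theorem sigmaMax_nonneg {ι κ : Type*} [Fintype ι] [Fintype κ] [DecidableEq κ]
    (M : Matrix ι κ ℝ) : 0 ≤ sigmaMax M := Real.sqrt_nonneg _

theorem opBound {ι κ : Type*} [Fintype ι] [Fintype κ] [DecidableEq κ]
    (M : Matrix ι κ ℝ) (v : κ → ℝ) :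
    ∑ i, (M.mulVec v i) ^ 2 ≤ (sigmaMax M) ^ 2 * ∑ k, (v k) ^ 2 := by
  rcases isEmpty_or_nonempty κ with hk | hk
  · simp [Matrix.mulVec, dotProduct, sq_nonneg, Finset.sum_const_zero]
  set hH : (Mᵀ * M).IsHermitian := by simpa [Matrix.conjTranspose_eq_transpose_of_trivial] using Matrix.isHermitian_conjTranspose_mul_self M
  set lam := hH.eigenvalues with hlam
  have hpsd : (Mᵀ * M).PosSemidef := by
    have := Matrix.posSemidef_conjTranspose_mul_self M
    rwa [Matrix.conjTranspose_eq_transpose_of_trivial] at this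
  have hnn : ∀ i, 0 ≤ lam i := hpsd.eigenvalues_nonneg
  have hbdd : BddAbove (Set.range lam) := Set.Finite.bddAbove (Set.finite_range _)
  have hLnn : 0 ≤ ⨆ i, lam i := le_trans (hnn (Classical.arbitrary κ)) (le_ciSup hbdd _)
  have hsq : (sigmaMax M) ^ 2 = ⨆ i, lam i := Real.sq_sqrt hLnn
  set U : Matrix κ κ ℝ := (hH.eigenvectorUnitary : Matrix κ κ ℝ) with hU
  have hspec : Mᵀ * M = U * Matrix.diagonal (RCLike.ofReal ∘ lam) * star U :=
    hH.spectral_theorem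
  have hunit : U * star U = 1 := (Matrix.mem_unitaryGroup_iff).mp hH.eigenvectorUnitary.2
  set w : κ → ℝ := (star U).mulVec v with hw
  have hvw : Matrix.vecMul v U = w := by
    ext i
    simp [hw, Matrix.vecMul, Matrix.mulVec, dotProduct, Matrix.star_eq_conjTranspose,
      Matrix.conjTranspose_apply, mul_comm]
  have key : ∑ i, (M.mulVec v i) ^ 2 = v ⬝ᵥ ((Mᵀ * M).mulVec v) := by
    rw [← Matrix.mulVec_mulVec, Matrix.dotProduct_mulVec, Matrix.vecMul_transpose]
    simp [dotProduct, sq]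
  have hstep : v ⬝ᵥ ((Mᵀ * M).mulVec v) = ∑ i, lam i * (w i) ^ 2 := by
    rw [hspec, ← Matrix.mulVec_mulVec, ← Matrix.mulVec_mulVec, Matrix.dotProduct_mulVec, hvw, ← hw]
    simp [dotProduct, Matrix.mulVec_diagonal, sq]
    exact Finset.sum_congr rfl fun i _ => by ring
  have hww : w ⬝ᵥ w = ∑ k, (v k) ^ 2 := by
    have h1 : v ⬝ᵥ ((U * star U).mulVec v) = w ⬝ᵥ w := by
      rw [← Matrix.mulVec_mulVec, Matrix.dotProduct_mulVec, hvw]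
    rw [← h1, hunit]
    simp [dotProduct, sq]
  calc ∑ i, (M.mulVec v i) ^ 2 = ∑ i, lam i * (w i) ^ 2 := by rw [key, hstep]
    _ ≤ ∑ i, (⨆ j, lam j) * (w i) ^ 2 := by
        refine Finset.sum_le_sum fun i _ => ?_
        exact mul_le_mul_of_nonneg_right (le_ciSup hbdd i) (sq_nonneg _)
    _ = (⨆ j, lam j) * (w ⬝ᵥ w) := by rw [← Finset.mul_sum]; simp [dotProduct, sq]
    _ = (sigmaMax M) ^ 2 * ∑ k, (v k) ^ 2 := by rw [hww, hsq]

theorem opBoundMat {ι κ ρ : Type*} [Fintype ι] [Fintype κ] [DecidableEq κ] [Fintype ρ]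
    (M : Matrix ι κ ℝ) (N : Matrix κ ρ ℝ) :
    ∑ i, ∑ j, ((M * N) i j) ^ 2 ≤ (sigmaMax M) ^ 2 * ∑ k, ∑ j, (N k j) ^ 2 := by
  rw [Finset.sum_comm]
  have : (sigmaMax M) ^ 2 * ∑ k, ∑ j, (N k j) ^ 2
      = ∑ j, (sigmaMax M) ^ 2 * ∑ k, (N k j) ^ 2 := by
    rw [← Finset.mul_sum, Finset.sum_comm]
  rw [this]
  refine Finset.sum_le_sum fun j _ => ?_
  have h := opBound M (fun k => N k j)
  have he : ∀ i, (M * N) i j = M.mulVec (fun k => N k j) i := by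
    intro i; simp [Matrix.mul_apply, Matrix.mulVec, dotProduct]
  calc ∑ i, ((M * N) i j) ^ 2 = ∑ i, (M.mulVec (fun k => N k j) i) ^ 2 := by
        exact Finset.sum_congr rfl fun i _ => by rw [he]
    _ ≤ (sigmaMax M) ^ 2 * ∑ k, (N k j) ^ 2 := h

lemma sqrt_sum_sub_le {α : Type*} (s : Finset α) (f g : α → ℝ) :
    Real.sqrt (∑ a ∈ s, (f a - g a) ^ 2) ≤
      Real.sqrt (∑ a ∈ s, (f a) ^ 2) + Real.sqrt (∑ a ∈ s, (g a) ^ 2) := by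
  set a := ∑ a ∈ s, (f a) ^ 2 with ha
  set b := ∑ a ∈ s, (g a) ^ 2 with hb
  have hann : 0 ≤ a := Finset.sum_nonneg fun _ _ => sq_nonneg _
  have hbnn : 0 ≤ b := Finset.sum_nonneg fun _ _ => sq_nonneg _
  have hcs : (∑ x ∈ s, f x * g x) ^ 2 ≤ a * b := Finset.sum_mul_sq_le_sq_mul_sq s f g
  have hsa : Real.sqrt a ^ 2 = a := Real.sq_sqrt hann
  have hsb : Real.sqrt b ^ 2 = b := Real.sq_sqrt hbnn
  have hexp : ∑ x ∈ s, (f x - g x) ^ 2 = a + b - 2 * ∑ x ∈ s, f x * g x := by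
    rw [ha, hb, Finset.mul_sum, ← Finset.sum_add_distrib, ← Finset.sum_sub_distrib]
    exact Finset.sum_congr rfl fun x _ => by ring
  have hab : (Real.sqrt a * Real.sqrt b) ^ 2 = a * b := by rw [mul_pow, hsa, hsb]
  have h2 : ∑ x ∈ s, (f x - g x) ^ 2 ≤ (Real.sqrt a + Real.sqrt b) ^ 2 := by
    rw [hexp]
    have hS : |∑ x ∈ s, f x * g x| ≤ Real.sqrt a * Real.sqrt b := by
      have h' := Real.sqrt_le_sqrt hcs
      rwa [Real.sqrt_sq_eq_abs, Real.sqrt_mul hann] at h'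
    nlinarith [neg_abs_le (∑ x ∈ s, f x * g x), hS]
  calc Real.sqrt (∑ x ∈ s, (f x - g x) ^ 2) ≤ Real.sqrt ((Real.sqrt a + Real.sqrt b) ^ 2) :=
        Real.sqrt_le_sqrt h2
    _ = Real.sqrt a + Real.sqrt b := by
        rw [Real.sqrt_sq (by positivity)]

lemma frob_eq {a b c : ℕ} (X : Tensor a b c) :
    frob X = Real.sqrt (∑ t : Fin a × Fin b × Fin c, (X t.1 t.2.1 t.2.2) ^ 2) := by
  refine congrArg Real.sqrt ?_
  rw [show (Finset.univ : Finset (Fin a × Fin b × Fin c)) = Finset.univ ×ˢ Finset.univ from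
    (Finset.univ_product_univ).symm, Finset.sum_product]
  refine Finset.sum_congr rfl fun i _ => ?_
  rw [show (Finset.univ : Finset (Fin b × Fin c)) = Finset.univ ×ˢ Finset.univ from
    (Finset.univ_product_univ).symm, Finset.sum_product]

lemma frob_sub_le {a b c : ℕ} (X Y : Tensor a b c) :
    frob (X - Y) ≤ frob X + frob Y := by
  have h := sqrt_sum_sub_le (Finset.univ : Finset (Fin a × Fin b × Fin c))
    (fun t => X t.1 t.2.1 t.2.2) (fun t => Y t.1 t.2.1 t.2.2)
  rw [frob_eq X, frob_eq Y, frob_eq (X - Y)]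
  convert h using 3
  rfl

lemma sorted_count (l : List ℝ) (hs : l.Pairwise (· ≤ ·)) (idx : ℕ) (h : idx < l.length) :
    l.length - idx ≤ l.countP (fun x => decide (l.getD idx 0 ≤ x)) := by
  have hQ : l.getD idx 0 = l[idx] := List.getD_eq_getElem l 0 h
  have hdrop : ∀ x ∈ l.drop idx, l.getD idx 0 ≤ x := by
    intro x hx
    obtain ⟨j, hj, rfl⟩ := List.getElem_of_mem hx
    rw [List.getElem_drop, hQ]
    rcases Nat.eq_zero_or_pos j with h0 | h0
    · simp [h0]
    · exact List.pairwise_iff_getElem.mp hs idx (idx + j) h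
        (by rw [List.length_drop] at hj; omega) (by omega)
  have h1 : (l.drop idx).length ≤ (l.drop idx).countP (fun x => decide (l.getD idx 0 ≤ x)) := by
    rw [List.countP_eq_length.mpr (fun x hx => decide_eq_true (hdrop x hx))]
  have h2 : (l.drop idx).countP (fun x => decide (l.getD idx 0 ≤ x))
      ≤ l.countP (fun x => decide (l.getD idx 0 ≤ x)) :=
    (List.drop_sublist idx l).countP_le
  rw [List.length_drop] at h1
  omega

lemma quantile_count {a b c : ℕ} (q : ℝ) (hq0 : 0 < q) (hq1 : q < 1)
    (hN : 0 < a * b * c) (E : Tensor a b c) :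
    (1 - q) * ((a * b * c : ℕ) : ℝ) ≤
      ((Finset.univ.filter (fun t : Fin a × Fin b × Fin c =>
        quantile q E ≤ |E t.1 t.2.1 t.2.2|)).card : ℝ) := by
  classical
  set N := a * b * c with hNdef
  set f : Fin a × Fin b × Fin c → ℝ := fun t => |E t.1 t.2.1 t.2.2| with hf
  set s : List ℝ := ((Finset.univ : Finset (Fin a × Fin b × Fin c)).val.map f).sort (· ≤ ·)
    with hs
  have hlen : s.length = N := by
    rw [hs, Multiset.length_sort, Multiset.card_map]
    simp [hNdef, mul_assoc]
  set idx := ⌊q * (N : ℝ)⌋.toNat - 1 with hidx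
  have h0 : (0:ℤ) ≤ ⌊q * (N : ℝ)⌋ := Int.floor_nonneg.mpr (by positivity)
  have hqN : (⌊q * (N : ℝ)⌋.toNat : ℝ) ≤ q * N := by
    have : ((⌊q * (N : ℝ)⌋.toNat : ℕ) : ℝ) = ((⌊q * (N : ℝ)⌋ : ℤ) : ℝ) := by
      exact_mod_cast congrArg (fun z : ℤ => (z : ℝ)) (Int.toNat_of_nonneg h0)
    rw [this]; exact Int.floor_le _
  have hNR : (0:ℝ) < (N:ℝ) := by exact_mod_cast hN
  have hidxlt : idx < N := by
    have h1 : (⌊q * (N : ℝ)⌋.toNat : ℝ) < N := lt_of_le_of_lt hqN (by nlinarith)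
    have h2 : ⌊q * (N : ℝ)⌋.toNat < N := by exact_mod_cast h1
    omega
  have hidxle : (idx : ℝ) ≤ q * N := by
    have : (idx : ℝ) ≤ (⌊q * (N : ℝ)⌋.toNat : ℝ) := by exact_mod_cast Nat.sub_le _ _
    linarith
  have hQ : quantile q E = s.getD idx 0 := rfl
  have hcard : (Finset.univ.filter (fun t : Fin a × Fin b × Fin c =>
      quantile q E ≤ f t)).card
      = s.countP (fun x => decide (quantile q E ≤ x)) := by
    rw [Finset.card_def, Finset.filter_val, ← Multiset.countP_eq_card_filter]
    have h2 : Multiset.countP (fun t => quantile q E ≤ f t) Finset.univ.val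
        = Multiset.countP (fun x => quantile q E ≤ x) (Finset.univ.val.map f) := by
      rw [Multiset.countP_map, Multiset.countP_eq_card_filter]
    rw [h2, ← Multiset.sort_eq (Finset.univ.val.map f) (· ≤ ·), Multiset.coe_countP]
  have hcount := sorted_count s (Multiset.pairwise_sort _ _) idx (by rw [hlen]; exact hidxlt)
  rw [hcard, ← hQ] at *
  have : ((N - idx : ℕ) : ℝ) ≤ (s.countP (fun x => decide (quantile q E ≤ x)) : ℝ) := by
    exact_mod_cast hlen ▸ hcount
  have hcast : ((N - idx : ℕ) : ℝ) = (N : ℝ) - idx := by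
    rw [Nat.cast_sub (le_of_lt hidxlt)]
  nlinarith


lemma sum3_prod {a b c : ℕ} (f : Fin a → Fin b → Fin c → ℝ) :
    ∑ t : Fin a × Fin b × Fin c, f t.1 t.2.1 t.2.2 = ∑ i, ∑ j, ∑ k, f i j k := by
  rw [show (Finset.univ : Finset (Fin a × Fin b × Fin c)) = Finset.univ ×ˢ Finset.univ from
    (Finset.univ_product_univ).symm, Finset.sum_product]
  refine Finset.sum_congr rfl fun i _ => ?_
  rw [show (Finset.univ : Finset (Fin b × Fin c)) = Finset.univ ×ˢ Finset.univ from
    (Finset.univ_product_univ).symm, Finset.sum_product]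

lemma sum3_mat {a b c : ℕ} (f : Fin a → Fin b → Fin c → ℝ) :
    ∑ i, ∑ j, ∑ k, f i j k = ∑ r : Fin c × Fin a, ∑ j, f r.2 j r.1 := by
  calc ∑ i, ∑ j, ∑ k, f i j k
      = ∑ i, ∑ k, ∑ j, f i j k := Finset.sum_congr rfl fun _ _ => Finset.sum_comm
    _ = ∑ k, ∑ i, ∑ j, f i j k := Finset.sum_comm
    _ = ∑ r : Fin c × Fin a, ∑ j, f r.2 j r.1 := by
        rw [show (Finset.univ : Finset (Fin c × Fin a)) = Finset.univ ×ˢ Finset.univ from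
          (Finset.univ_product_univ).symm, Finset.sum_product]

lemma tMul_sub {m l p n : ℕ} (A : Tensor m l n) (X Y : Tensor l p n) :
    tMul A X - tMul A Y = tMul A (X - Y) := by
  funext i j k
  simp only [Pi.sub_apply, tMul, Matrix.mul_apply, ← Finset.sum_sub_distrib]
  refine Finset.sum_congr rfl fun t _ => ?_
  simp [unfoldT, mul_sub]

set_option maxHeartbeats 1000000

/-- Corrupted row selected: if row `i` passes the quantile test
(`|Eᵢⱼₕ| < Q_q(E)` for all `j, h`) and `Mᵢ Mᵢᵀ` is invertible, then the Kaczmarz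
update at row `i` satisfies
`‖X⁺ - X⋆‖_F ≤ ‖X - X⋆‖_F (1 + σ_max(bcirc A) η / √(m(1-β-q)))`. -/
theorem corrupted_row_update_bound {m l p n : ℕ} (A : Tensor m l n)
    (Xstar : Tensor l p n) (Bcorr B : Tensor m p n)
    (hB : B = tMul A Xstar + Bcorr) (β q : ℝ)
    (hβ : ((Finset.univ.filter
        (fun t : Fin m × Fin p × Fin n => Bcorr t.1 t.2.1 t.2.2 ≠ 0)).card : ℝ)
      = β * (m * p * n))
    (hq0 : 0 < q) (hq1 : q < 1 - β)
    (X : Tensor l p n) (i : Fin m)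
    (hinv : IsUnit (bcirc (rowSlice A i) * (bcirc (rowSlice A i))ᵀ).det)
    (hflag : ∀ (j : Fin p) (h : Fin n),
      |(tMul A X - B) i j h| < quantile q (tMul A X - B)) :
    frob (kUpdate A B X i - Xstar) ≤
      frob (X - Xstar) *
        (1 + sigmaMax (bcirc A) * eta A / Real.sqrt (m * (1 - β - q))) := by
  classical
  have hm : 0 < m := i.pos
  set E : Tensor m p n := tMul A X - B with hE
  set Q : ℝ := quantile q E with hQdef
  set D : Tensor l p n := X - Xstar with hD
  have hσnn : 0 ≤ sigmaMax (bcirc A) := sigmaMax_nonneg _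
  have hη0 : sigmaMax ((bcirc (rowSlice A i))ᵀ *
      (bcirc (rowSlice A i) * (bcirc (rowSlice A i))ᵀ)⁻¹) ≤ eta A := by
    rw [eta]
    exact le_ciSup (f := fun i : Fin m => sigmaMax ((bcirc (rowSlice A i))ᵀ *
      (bcirc (rowSlice A i) * (bcirc (rowSlice A i))ᵀ)⁻¹))
      (Set.Finite.bddAbove (Set.finite_range _)) i
  have hηnn : 0 ≤ eta A := le_trans (sigmaMax_nonneg _) hη0
  have hfac : 0 ≤ 1 + sigmaMax (bcirc A) * eta A / Real.sqrt (m * (1 - β - q)) := by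
    have : 0 ≤ sigmaMax (bcirc A) * eta A / Real.sqrt (m * (1 - β - q)) := by positivity
    linarith
  by_cases hl : l = 0
  · subst hl
    have hz : frob (kUpdate A B X i - Xstar) = 0 := by simp [frob]
    rw [hz]
    exact mul_nonneg (Real.sqrt_nonneg _) hfac
  by_cases hp : p = 0
  · subst hp
    have hz : frob (kUpdate A B X i - Xstar) = 0 := by simp [frob]
    rw [hz]
    exact mul_nonneg (Real.sqrt_nonneg _) hfac
  by_cases hn : n = 0
  · subst hn
    have hz : frob (kUpdate A B X i - Xstar) = 0 := by simp [frob]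
    rw [hz]
    exact mul_nonneg (Real.sqrt_nonneg _) hfac
  have hlp : 0 < l := Nat.pos_of_ne_zero hl
  have hpp : 0 < p := Nat.pos_of_ne_zero hp
  have hnp : 0 < n := Nat.pos_of_ne_zero hn
  have hNpos : 0 < m * p * n := by positivity
  have hmR : (0:ℝ) < m := by exact_mod_cast hm
  have hpR : (0:ℝ) < p := by exact_mod_cast hpp
  have hnR : (0:ℝ) < n := by exact_mod_cast hnp
  have hmpnR : (0:ℝ) < (m : ℝ) * p * n := by positivity
  have hβnn : 0 ≤ β := by
    have h1 : (0:ℝ) ≤ β * (m * p * n) := hβ ▸ Nat.cast_nonneg _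
    nlinarith
  have hq1' : q < 1 := by linarith
  have h1βq : 0 < 1 - β - q := by linarith
  -- Q nonneg
  have hQnn : 0 ≤ Q := le_trans (abs_nonneg _) (le_of_lt (hflag ⟨0, hpp⟩ ⟨0, hnp⟩))
  -- the corrupted set and the large-entry set
  set S := Finset.univ.filter
    (fun t : Fin m × Fin p × Fin n => Q ≤ |E t.1 t.2.1 t.2.2|) with hSdef
  set Cs := Finset.univ.filter
    (fun t : Fin m × Fin p × Fin n => Bcorr t.1 t.2.1 t.2.2 ≠ 0) with hCdef
  have hScard : (1 - q) * ((m * p * n : ℕ) : ℝ) ≤ (S.card : ℝ) :=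
    quantile_count q hq0 hq1' hNpos E
  have hsd : ((S \ Cs).card : ℝ) ≥ (1 - β - q) * ((m : ℝ) * p * n) := by
    have h1 : S.card - Cs.card ≤ (S \ Cs).card := Finset.le_card_sdiff Cs S
    have h2 : ((S.card - Cs.card : ℕ) : ℝ) ≤ ((S \ Cs).card : ℝ) := by exact_mod_cast h1
    have h3 : (S.card : ℝ) - (Cs.card : ℝ) ≤ ((S.card - Cs.card : ℕ) : ℝ) := by
      rcases le_or_gt Cs.card S.card with h | h
      · rw [Nat.cast_sub h]
      · have : S.card - Cs.card = 0 := by omega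
        rw [this]
        push_cast
        have : (S.card : ℝ) ≤ (Cs.card : ℝ) := by exact_mod_cast le_of_lt h
        linarith
    have h4 : ((m * p * n : ℕ) : ℝ) = (m : ℝ) * p * n := by push_cast; ring
    rw [hβ] at *
    nlinarith [hScard, h2, h3]
  -- E agrees with tMul A D off the corrupted set
  have hED : E = tMul A D - Bcorr := by
    rw [hE, hB, hD, ← tMul_sub]
    funext a j k
    simp [tMul]
    ring
  -- sum over S \ Cs
  have hsum1 : ((S \ Cs).card : ℝ) * Q ^ 2 ≤ ∑ t ∈ S \ Cs, (E t.1 t.2.1 t.2.2) ^ 2 := by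
    rw [mul_comm]
    calc (Q ^ 2) * ((S \ Cs).card : ℝ) = ∑ _t ∈ S \ Cs, Q ^ 2 := by
          rw [Finset.sum_const, nsmul_eq_mul, mul_comm]
      _ ≤ ∑ t ∈ S \ Cs, (E t.1 t.2.1 t.2.2) ^ 2 := by
          refine Finset.sum_le_sum fun t ht => ?_
          have htS : t ∈ S := (Finset.mem_sdiff.mp ht).1
          have habs : Q ≤ |E t.1 t.2.1 t.2.2| := (Finset.mem_filter.mp htS).2
          calc Q ^ 2 ≤ |E t.1 t.2.1 t.2.2| ^ 2 := pow_le_pow_left₀ hQnn habs 2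
            _ = (E t.1 t.2.1 t.2.2) ^ 2 := sq_abs _
  have hsum2 : ∑ t ∈ S \ Cs, (E t.1 t.2.1 t.2.2) ^ 2
      ≤ ∑ t : Fin m × Fin p × Fin n, ((tMul A D) t.1 t.2.1 t.2.2) ^ 2 := by
    have hcong : ∀ t ∈ S \ Cs, (E t.1 t.2.1 t.2.2) ^ 2 = ((tMul A D) t.1 t.2.1 t.2.2) ^ 2 := by
      intro t ht
      have hb0 : Bcorr t.1 t.2.1 t.2.2 = 0 := by
        have h' := (Finset.mem_sdiff.mp ht).2
        simpa [hCdef] using h'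
      rw [hED]
      simp [hb0]
    rw [Finset.sum_congr rfl hcong]
    exact Finset.sum_le_sum_of_subset_of_nonneg (Finset.subset_univ _)
      (fun t _ _ => sq_nonneg _)
  have hDop : ∑ t : Fin m × Fin p × Fin n, ((tMul A D) t.1 t.2.1 t.2.2) ^ 2
      ≤ sigmaMax (bcirc A) ^ 2 * ∑ a, ∑ j, ∑ k, (D a j k) ^ 2 := by
    rw [sum3_prod (fun a j k => (tMul A D a j k) ^ 2),
      sum3_mat (fun a j k => (tMul A D a j k) ^ 2)]
    calc ∑ r : Fin n × Fin m, ∑ j, (tMul A D r.2 j r.1) ^ 2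
        = ∑ r : Fin n × Fin m, ∑ j, ((bcirc A * unfoldT D) r j) ^ 2 :=
          Finset.sum_congr rfl fun r _ => Finset.sum_congr rfl fun j _ => rfl
      _ ≤ sigmaMax (bcirc A) ^ 2 * ∑ r : Fin n × Fin l, ∑ j, (unfoldT D r j) ^ 2 :=
          opBoundMat _ _
      _ = sigmaMax (bcirc A) ^ 2 * ∑ a, ∑ j, ∑ k, (D a j k) ^ 2 := by
          congr 1
          rw [sum3_mat (fun a j k => (D a j k) ^ 2)]
          exact Finset.sum_congr rfl fun r _ => Finset.sum_congr rfl fun j _ => rfl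
  set F2 := ∑ a, ∑ j, ∑ k, (D a j k) ^ 2 with hF2
  have hF2nn : 0 ≤ F2 := by
    rw [hF2]
    refine Finset.sum_nonneg fun _ _ => Finset.sum_nonneg fun _ _ =>
      Finset.sum_nonneg fun _ _ => sq_nonneg _
  have hfD : frob D = Real.sqrt F2 := rfl
  have hfDnn : 0 ≤ frob D := Real.sqrt_nonneg _
  have key1 : (1 - β - q) * ((m : ℝ) * p * n) * Q ^ 2 ≤ sigmaMax (bcirc A) ^ 2 * F2 := by
    have hstep : (1 - β - q) * ((m : ℝ) * p * n) * Q ^ 2 ≤ ((S \ Cs).card : ℝ) * Q ^ 2 :=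
      mul_le_mul_of_nonneg_right hsd.le (sq_nonneg Q)
    linarith [hsum1, hsum2, hDop]
  -- residual bound
  set Rmat : Matrix (Fin n × Fin 1) (Fin p) ℝ :=
    bcirc (rowSlice A i) * unfoldT X - unfoldT (rowSlice B i) with hRmat
  set Pmat : Matrix (Fin n × Fin l) (Fin n × Fin 1) ℝ :=
    (bcirc (rowSlice A i))ᵀ * (bcirc (rowSlice A i) * (bcirc (rowSlice A i))ᵀ)⁻¹ with hPmat
  have hRE : ∀ (r : Fin n × Fin 1) (j : Fin p), Rmat r j = E i j r.1 := by
    rintro ⟨k, u⟩ j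
    show (bcirc (rowSlice A i) * unfoldT X) (k, u) j - unfoldT (rowSlice B i) (k, u) j
      = (tMul A X) i j k - B i j k
    have h1 : (bcirc (rowSlice A i) * unfoldT X) (k, u) j
        = (bcirc A * unfoldT X) (k, i) j := by
      rw [Matrix.mul_apply, Matrix.mul_apply]
      exact Finset.sum_congr rfl fun x _ => rfl
    rw [h1]
    rfl
  have hRsum : ∑ r : Fin n × Fin 1, ∑ j, (Rmat r j) ^ 2 ≤ ((n : ℝ) * p) * Q ^ 2 := by
    calc ∑ r : Fin n × Fin 1, ∑ j, (Rmat r j) ^ 2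
        = ∑ r : Fin n × Fin 1, ∑ j, (E i j r.1) ^ 2 :=
          Finset.sum_congr rfl fun r _ => Finset.sum_congr rfl fun j _ => by rw [hRE]
      _ ≤ ∑ _r : Fin n × Fin 1, ∑ _j : Fin p, Q ^ 2 := by
          refine Finset.sum_le_sum fun r _ => Finset.sum_le_sum fun j _ => ?_
          calc (E i j r.1) ^ 2 = |E i j r.1| ^ 2 := (sq_abs _).symm
            _ ≤ Q ^ 2 := pow_le_pow_left₀ (abs_nonneg _) (hflag j r.1).le 2
      _ = ((n : ℝ) * p) * Q ^ 2 := by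
          simp [Finset.sum_const, Finset.card_univ, nsmul_eq_mul]
          ring
  set C0 : Tensor l p n := fun a j k => (Pmat * Rmat) (k, a) j with hC0def
  have hdec : kUpdate A B X i - Xstar = D - C0 := by
    funext a j k
    show kUpdate A B X i a j k - Xstar a j k = D a j k - C0 a j k
    simp only [kUpdate, hC0def, hPmat, hRmat, hD, Pi.sub_apply]
    ring
  have hc0sum : ∑ a, ∑ j, ∑ k, (C0 a j k) ^ 2 ≤ (eta A) ^ 2 * (((n : ℝ) * p) * Q ^ 2) := by
    rw [sum3_mat (fun a j k => (C0 a j k) ^ 2)]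
    calc ∑ r : Fin n × Fin l, ∑ j, (C0 r.2 j r.1) ^ 2
        = ∑ r : Fin n × Fin l, ∑ j, ((Pmat * Rmat) r j) ^ 2 :=
          Finset.sum_congr rfl fun r _ => Finset.sum_congr rfl fun j _ => rfl
      _ ≤ sigmaMax Pmat ^ 2 * ∑ r : Fin n × Fin 1, ∑ j, (Rmat r j) ^ 2 := opBoundMat _ _
      _ ≤ (eta A) ^ 2 * (((n : ℝ) * p) * Q ^ 2) := by
          refine mul_le_mul (pow_le_pow_left₀ (sigmaMax_nonneg _) hη0 2) hRsum ?_ ?_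
          · exact Finset.sum_nonneg fun _ _ => Finset.sum_nonneg fun _ _ => sq_nonneg _
          · positivity
  have hnpnn : (0:ℝ) ≤ (n : ℝ) * p := by positivity
  have hfC0 : frob C0 ≤ eta A * (Real.sqrt ((n : ℝ) * p) * Q) := by
    have hb : (eta A * (Real.sqrt ((n : ℝ) * p) * Q)) ^ 2
        = (eta A) ^ 2 * (((n : ℝ) * p) * Q ^ 2) := by
      rw [mul_pow, mul_pow, Real.sq_sqrt hnpnn]
    have h2 : frob C0 ≤ Real.sqrt ((eta A * (Real.sqrt ((n : ℝ) * p) * Q)) ^ 2) := by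
      rw [frob]
      exact Real.sqrt_le_sqrt (by rw [hb]; exact hc0sum)
    rwa [Real.sqrt_sq (by positivity)] at h2
  have hQfD : Real.sqrt ((1 - β - q) * ((m : ℝ) * p * n)) * Q ≤ sigmaMax (bcirc A) * frob D := by
    have h2 : (Real.sqrt ((1 - β - q) * ((m : ℝ) * p * n)) * Q) ^ 2
        ≤ (sigmaMax (bcirc A) * frob D) ^ 2 := by
      rw [mul_pow, mul_pow, Real.sq_sqrt (by positivity), hfD, Real.sq_sqrt hF2nn]
      exact key1
    have h3 := Real.sqrt_le_sqrt h2
    rwa [Real.sqrt_sq (mul_nonneg (Real.sqrt_nonneg _) hQnn),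
      Real.sqrt_sq (mul_nonneg hσnn hfDnn)] at h3
  have hs1 : (0:ℝ) < Real.sqrt ((m : ℝ) * (1 - β - q)) := Real.sqrt_pos.mpr (by positivity)
  have hss : Real.sqrt ((n : ℝ) * p) * Real.sqrt ((m : ℝ) * (1 - β - q))
      = Real.sqrt ((1 - β - q) * ((m : ℝ) * p * n)) := by
    rw [← Real.sqrt_mul hnpnn]
    congr 1
    ring
  have hkey : frob C0 * Real.sqrt ((m : ℝ) * (1 - β - q))
      ≤ frob D * (sigmaMax (bcirc A) * eta A) := by
    calc frob C0 * Real.sqrt ((m : ℝ) * (1 - β - q))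
        ≤ (eta A * (Real.sqrt ((n : ℝ) * p) * Q)) * Real.sqrt ((m : ℝ) * (1 - β - q)) :=
          mul_le_mul_of_nonneg_right hfC0 hs1.le
      _ = eta A * (Real.sqrt ((1 - β - q) * ((m : ℝ) * p * n)) * Q) := by
          rw [← hss]; ring
      _ ≤ eta A * (sigmaMax (bcirc A) * frob D) :=
          mul_le_mul_of_nonneg_left hQfD hηnn
      _ = frob D * (sigmaMax (bcirc A) * eta A) := by ring
  have hfC0' : frob C0 ≤ frob D * (sigmaMax (bcirc A) * eta A / Real.sqrt ((m : ℝ) * (1 - β - q))) := by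
    rw [mul_div_assoc']
    exact (le_div_iff₀ hs1).mpr hkey
  calc frob (kUpdate A B X i - Xstar) = frob (D - C0) := by rw [hdec]
    _ ≤ frob D + frob C0 := frob_sub_le D C0
    _ ≤ frob D + frob D * (sigmaMax (bcirc A) * eta A / Real.sqrt ((m : ℝ) * (1 - β - q))) := by
        linarith [hfC0']
    _ = frob D * (1 + sigmaMax (bcirc A) * eta A / Real.sqrt ((m : ℝ) * (1 - β - q))) := by
        ring
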